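/- Let A be a subring of B such that the map i* : Spec B → Spec A, P ↦ P ∩ A, is injective and open onto its image. Then A is a dense subring of B: for every ideal I of B and every b ∉ rad(I) there exists u ∉ rad(I) with u·b ∈ A. -/
import Mathlib


theorem stmt_13 {B : Type*} [CommRing B] (A : Subring B)
    (hinj : Function.Injective (fun P : PrimeSpectrum B => PrimeSpectrum.comap A.subtype P))
    (hopen : ∀ V : Set (PrimeSpectrum B), IsOpen V →
      ∃ U : Set (PrimeSpectrum A), IsOpen U ∧
        PrimeSpectrum.comap A.subtype '' V = U ∩ Set.range (PrimeSpectrum.comap A.subtype)) :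
    ∀ I : Ideal B, ∀ b ∉ I.radical, ∃ u ∉ I.radical, u * b ∈ A := by
  intro I b hb
  -- find a prime J ⊇ I with b ∉ J
  rw [Ideal.radical_eq_sInf, Ideal.mem_sInf] at hb
  push_neg at hb
  obtain ⟨J, ⟨hIJ, hJp⟩, hbJ⟩ := hb
  haveI := hJp
  set P : PrimeSpectrum B := ⟨J, hJp⟩ with hP
  have hPb : P ∈ (PrimeSpectrum.basicOpen b : Set (PrimeSpectrum B)) := hbJ
  obtain ⟨U, hU, himg⟩ := hopen (PrimeSpectrum.basicOpen b) (PrimeSpectrum.basicOpen b).2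
  have hPim : PrimeSpectrum.comap A.subtype P ∈
      PrimeSpectrum.comap A.subtype '' (PrimeSpectrum.basicOpen b : Set (PrimeSpectrum B)) :=
    ⟨P, hPb, rfl⟩
  have hPU : PrimeSpectrum.comap A.subtype P ∈ U := by
    rw [himg] at hPim; exact hPim.1
  obtain ⟨s, ⟨a, rfl⟩, hmem, hsub⟩ :=
    (PrimeSpectrum.isTopologicalBasis_basic_opens (R := A)).exists_subset_of_mem_open hPU hU
  -- key: basicOpen (a : B) ≤ basicOpen b
  have key : PrimeSpectrum.basicOpen (A.subtype a) ≤ PrimeSpectrum.basicOpen b := by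
    intro Q hQ
    have hQa : PrimeSpectrum.comap A.subtype Q ∈ (PrimeSpectrum.basicOpen a : Set (PrimeSpectrum A)) := by
      simpa [PrimeSpectrum.mem_basicOpen] using hQ
    have : PrimeSpectrum.comap A.subtype Q ∈
        PrimeSpectrum.comap A.subtype '' (PrimeSpectrum.basicOpen b : Set (PrimeSpectrum B)) := by
      rw [himg]
      exact ⟨hsub hQa, ⟨Q, rfl⟩⟩
    obtain ⟨Q', hQ'b, hQ'⟩ := this
    have : Q' = Q := hinj hQ'
    rwa [this] at hQ'b
  rw [PrimeSpectrum.basicOpen_le_basicOpen_iff] at key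
  obtain ⟨n, hn⟩ := key
  rw [Ideal.mem_span_singleton] at hn
  obtain ⟨c, hc⟩ := hn
  refine ⟨c, ?_, ?_⟩
  · intro hcI
    have hcJ : c ∈ J := by
      have : I.radical ≤ J := hJp.radical_le_iff.mpr hIJ
      exact this hcI
    have haJ : A.subtype a ∈ J := by
      have : (A.subtype a) ^ n ∈ J := by
        rw [hc]; exact J.mul_mem_left b hcJ
      exact hJp.mem_of_pow_mem n this
    have : a ∉ (PrimeSpectrum.comap A.subtype P).asIdeal := hmem
    exact this haJ
  · have : c * b = (A.subtype a) ^ n := by rw [hc]; ring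
    rw [this]
    exact A.pow_mem a.2 n
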